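/- For integer k ≥ 1 and real ε with 0 ≤ ε < 1, the following inequality holds: (1/(1 + 2kε/(1−ε)))·(1 − (1 − 1/k)^k·((1−ε)/(1+ε))^k) ≥ (1/(1 + 4kε/(1−ε)^2))·(1 − (1 − 1/k)^k·((1−ε)/(1+ε))^{2k}). -/

import Mathlib

/-- Key polynomial inequality. -/
lemma gsemo_key_ineq (K ε a s : ℝ) (hK : 1 ≤ K) (hε0 : 0 ≤ ε) (hε1 : ε < 1)
    (ha0 : 0 ≤ a) (ha : a ≤ 1/2) (hs0 : 0 ≤ s) (hs1 : s ≤ 1)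
    (h1 : s * ((1-ε) + 2*K*ε) ≤ 1-ε)
    (h2 : (1+ε) * (1-s) ≤ 2*K*ε) :
    (1-ε)*(1-a*s^2)*((1-ε)+2*K*ε) ≤ (1-a*s)*((1-ε)^2+4*K*ε) := by
  have hd : (0:ℝ) ≤ 1-ε := by linarith
  have hKe : (0:ℝ) ≤ 2*K*ε := by nlinarith
  have c1 : (0:ℝ) ≤ a*(1-s)*(1-ε) := by
    apply mul_nonneg (mul_nonneg ha0 (by linarith)) hd
  have H1 := mul_le_mul_of_nonneg_left h1 c1
  have c2 : (0:ℝ) ≤ a*(1-ε)^2 := by positivity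
  have H2 := mul_le_mul_of_nonneg_left h2 c2
  have h3 : a*(1-ε)^2 ≤ 1 - a*s := by
    nlinarith [mul_le_mul_of_nonneg_left hs1 ha0, mul_nonneg ha0 hs0,
      mul_nonneg (mul_nonneg ha0 hε0) hε0, mul_nonneg ha0 hε0]
  have H3 := mul_le_mul_of_nonneg_left h3 hKe
  have H4 : (0:ℝ) ≤ ε * (a*(1-s)*(1-ε)*(1-ε)) := by
    apply mul_nonneg hε0 (mul_nonneg c1 hd)
  have H5 : (0:ℝ) ≤ ε * (2*K*ε*(1-a*s)) := by
    apply mul_nonneg hε0 (mul_nonneg hKe (by nlinarith [mul_le_mul_of_nonneg_left hs1 ha0, mul_nonneg ha0 hs0]))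
  nlinarith [H1, H2, H3, H4, H5]

/-- The GSEMO approximation guarantee for ε-approximately submodular functions
(Horel–Singer notion) is at least the best known greedy guarantee. -/
theorem gsemo_guarantee_ge_greedy_guarantee (k : ℕ) (hk : 1 ≤ k) (ε : ℝ)
    (hε0 : 0 ≤ ε) (hε1 : ε < 1) :
    1 / (1 + 2 * k * ε / (1 - ε)) *
        (1 - (1 - 1 / (k : ℝ)) ^ k * ((1 - ε) / (1 + ε)) ^ k) ≥
      1 / (1 + 4 * k * ε / (1 - ε) ^ 2) *
        (1 - (1 - 1 / (k : ℝ)) ^ k * ((1 - ε) / (1 + ε)) ^ (2 * k)) := by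
  have hK : (1:ℝ) ≤ (k:ℝ) := by exact_mod_cast hk
  have hK0 : (0:ℝ) < (k:ℝ) := by linarith
  have hd : (0:ℝ) < 1 - ε := by linarith
  have hu : (0:ℝ) < 1 + ε := by linarith
  set K := (k:ℝ) with hKdef
  set a := (1 - 1/K)^k with ha_def
  set b := (1-ε)/(1+ε) with hb_def
  have hb0 : 0 ≤ b := div_nonneg hd.le hu.le
  have hb1 : b ≤ 1 := by
    rw [hb_def, div_le_one hu]; linarith
  set s := b^k with hs_def
  have hs0 : 0 ≤ s := pow_nonneg hb0 k
  have hs1 : s ≤ 1 := pow_le_one₀ hb0 hb1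
  have ha0 : 0 ≤ a := by
    apply pow_nonneg
    have : 1/K ≤ 1 := by rw [div_le_one hK0]; linarith
    linarith
  -- a ≤ 1/2
  have ha2 : a ≤ 1/2 := by
    rcases eq_or_lt_of_le hk with h | h
    · have hK1 : K = 1 := by rw [hKdef, ← h]; norm_num
      rw [ha_def, hK1, ← h]; norm_num
    · have hk2 : (2:ℝ) ≤ K := by rw [hKdef]; exact_mod_cast h
      have hK1 : (0:ℝ) < K - 1 := by linarith
      have hber := one_add_mul_le_pow
        (show (-2:ℝ) ≤ 1/(K-1) by
          have : (0:ℝ) ≤ 1/(K-1) := by positivity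
          linarith) k
      have hber' : (2:ℝ) ≤ (1 + 1/(K-1))^k := by
        have : (1:ℝ) ≤ K * (1/(K-1)) := by
          rw [mul_one_div, le_div_iff₀ hK1]; linarith
        calc (2:ℝ) ≤ 1 + K * (1/(K-1)) := by linarith
          _ ≤ (1 + 1/(K-1))^k := hber
      have hmul : a * (1 + 1/(K-1))^k = 1 := by
        rw [ha_def, ← mul_pow]
        have : (1 - 1/K) * (1 + 1/(K-1)) = 1 := by
          field_simp
          ring
        rw [this, one_pow]
      nlinarith [mul_le_mul_of_nonneg_left hber' ha0]
  -- h1 : s * ((1-ε) + 2*K*ε) ≤ 1-ε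
  have h1 : s * ((1-ε) + 2*K*ε) ≤ 1-ε := by
    have hber := one_add_mul_le_pow
      (show (-2:ℝ) ≤ 2*ε/(1-ε) by
        have : (0:ℝ) ≤ 2*ε/(1-ε) := by positivity
        linarith) k
    have e1 : (1:ℝ) + 2*ε/(1-ε) = (1+ε)/(1-ε) := by field_simp; ring
    rw [e1] at hber
    have hmul : s * ((1+ε)/(1-ε))^k = 1 := by
      rw [hs_def, ← mul_pow, hb_def]
      have : (1-ε)/(1+ε) * ((1+ε)/(1-ε)) = 1 := by
        rw [div_mul_div_comm, mul_comm]
        exact div_self (mul_pos hu hd).ne'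
      rw [this, one_pow]
    have := mul_le_mul_of_nonneg_left hber hs0
    rw [hmul] at this
    -- this : s * (1 + K * (2*ε/(1-ε))) ≤ 1
    have H := mul_le_mul_of_nonneg_right this hd.le
    have e2 : s * (1 + K * (2*ε/(1-ε))) * (1-ε) = s * ((1-ε) + 2*K*ε) := by
      have hc : 2*ε/(1-ε) * (1-ε) = 2*ε := div_mul_cancel₀ _ hd.ne'
      calc s * (1 + K * (2*ε/(1-ε))) * (1-ε)
          = s * ((1-ε) + K * (2*ε/(1-ε) * (1-ε))) := by ring
        _ = s * ((1-ε) + 2*K*ε) := by rw [hc]; ring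
    rw [e2, one_mul] at H
    exact H
  -- h2 : (1+ε)*(1-s) ≤ 2*K*ε
  have h2 : (1+ε) * (1-s) ≤ 2*K*ε := by
    have hber := one_add_mul_le_pow (show (-2:ℝ) ≤ b - 1 by linarith) k
    have : 1 + K * (b-1) ≤ s := by
      rw [hs_def]
      have eb : (1:ℝ) + (b-1) = b := by ring
      calc 1 + K * (b-1) ≤ (1 + (b-1))^k := hber
        _ = b^k := by rw [eb]
    have hb' : (1+ε) * (1-b) = 2*ε := by
      rw [hb_def]; field_simp; ring
    have h1s : 1 - s ≤ K * (1-b) := by linarith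
    calc (1+ε) * (1-s) ≤ (1+ε) * (K * (1-b)) :=
          mul_le_mul_of_nonneg_left h1s hu.le
      _ = K * ((1+ε)*(1-b)) := by ring
      _ = K * (2*ε) := by rw [hb']
      _ = 2*K*ε := by ring
  -- key inequality
  have key := gsemo_key_ineq K ε a s hK hε0 hε1 ha0 ha2 hs0 hs1 h1 h2
  -- now rewrite the goal
  have hKe : (0:ℝ) ≤ 2*K*ε := by positivity
  have hP : (0:ℝ) < 1 + 2*K*ε/(1-ε) := by positivity
  have hQ : (0:ℝ) < 1 + 4*K*ε/(1-ε)^2 := by positivity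
  have hA : 1 / (1 + 2*K*ε/(1-ε)) = (1-ε)/((1-ε)+2*K*ε) := by
    rw [div_eq_div_iff hP.ne' (show ((1-ε)+2*K*ε) ≠ 0 by positivity)]
    field_simp
  have hB : 1 / (1 + 4*K*ε/(1-ε)^2) = (1-ε)^2/((1-ε)^2+4*K*ε) := by
    rw [div_eq_div_iff hQ.ne' (show ((1-ε)^2+4*K*ε) ≠ 0 by positivity)]
    field_simp
  have hpow : b ^ (2*k) = s^2 := by
    rw [hs_def, ← pow_mul, mul_comm]
  rw [ge_iff_le, hA, hB, hpow, div_mul_eq_mul_div, div_mul_eq_mul_div,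
    div_le_div_iff₀ (by positivity) (by positivity)]
  nlinarith [mul_le_mul_of_nonneg_left key hd.le]
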